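/- Assume the random variables Y_1, …, Y_N are independent under P and the design does not depend on ω (p(s, ω) = q(s)). If s₀ is a sample with q(s₀) > 0 having a repeated label, say s₀(k) = s₀(ℓ) = i for some draws k ≠ ℓ, and Y_i is not P-almost surely constant, then the sample variables Y_{i(k)} and Y_{i(ℓ)} are NOT stochastically independent under the posterior distribution P(· | s₀). -/

import Mathlib

open MeasureTheory Filter Topology ProbabilityTheory

/-- If `Y_1, …, Y_N` are independent under `P`, the design has constant
mass function `q` (`P_{d,m} = q ⊗ P`), and `s₀` is a sample with `q(s₀) > 0` having a
repeated label `s₀(k) = s₀(ℓ)` for draws `k ≠ ℓ`, with `Y_{s₀(k)}` not `P`-a.s. constant,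
then the sample variables `Y_{i(k)}` and `Y_{i(ℓ)}` are NOT stochastically independent under
the posterior distribution `P(· | s₀)`. -/

lemma zeroOne_dirac (ν : Measure ℝ) [IsProbabilityMeasure ν]
    (h : ∀ B : Set ℝ, MeasurableSet B → ν B = 0 ∨ ν B = 1) : ∃ c : ℝ, ν {c} = 1 := by
  set S : Set ℝ := {t : ℝ | ν (Set.Iic t) = 1} with hS
  have hne : S.Nonempty := by
    rw [Set.nonempty_iff_ne_empty]
    intro hemp
    have h0 : ∀ t : ℝ, ν (Set.Iic t) = 0 := fun t =>
      (h _ measurableSet_Iic).resolve_right (fun h1 => by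
        have : t ∈ S := h1
        rw [hemp] at this
        exact this.elim)
    have : (Set.univ : Set ℝ) = ⋃ n : ℕ, Set.Iic (n : ℝ) := by
      ext x
      simp only [Set.mem_univ, Set.mem_iUnion, Set.mem_Iic, true_iff]
      exact exists_nat_ge x
    have huniv : ν Set.univ = 0 := by
      rw [this]
      exact measure_iUnion_null fun n => h0 _
    simp [measure_univ] at huniv
  have hbdd : BddBelow S := by
    obtain ⟨t0, ht0⟩ : ∃ t0 : ℝ, ν (Set.Iic t0) = 0 := by
      by_contra hc
      push_neg at hc
      have h1 : ∀ n : ℕ, ν (Set.Iic (-(n : ℝ))) = 1 := fun n =>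
        (h _ measurableSet_Iic).resolve_left (hc _)
      have hanti : Antitone fun n : ℕ => Set.Iic (-(n : ℝ)) := fun a b hab =>
        Set.Iic_subset_Iic.2 (neg_le_neg (by exact_mod_cast hab))
      have hinter : (⋂ n : ℕ, Set.Iic (-(n : ℝ))) = ∅ := by
        ext x
        simp only [Set.mem_iInter, Set.mem_Iic, Set.mem_empty_iff_false, iff_false, not_forall,
          not_le]
        obtain ⟨m, hm⟩ := exists_nat_ge (-x)
        refine ⟨m + 1, ?_⟩
        push_cast
        linarith
      have hmi := hanti.measure_iInter
        (fun n : ℕ => (measurableSet_Iic.nullMeasurableSet : NullMeasurableSet _ ν))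
        ⟨0, measure_ne_top ν _⟩
      rw [hinter] at hmi
      simp only [measure_empty, h1, iInf_const] at hmi
      exact zero_ne_one hmi
    refine ⟨t0, fun t ht => ?_⟩
    by_contra hlt
    push_neg at hlt
    have := measure_mono (μ := ν) (Set.Iic_subset_Iic.2 hlt.le)
    rw [ht, ht0] at this
    exact absurd this (by norm_num)
  set c := sInf S with hc
  have hIic : ν (Set.Iic c) = 1 := by
    have heq : Set.Iic c = ⋂ n : ℕ, Set.Iic (c + 1 / ((n : ℝ) + 1)) := by
      ext x
      simp only [Set.mem_Iic, Set.mem_iInter]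
      constructor
      · intro hx n; have : (0:ℝ) < 1 / ((n : ℝ) + 1) := by positivity
        linarith
      · intro hx
        by_contra hlt
        push_neg at hlt
        obtain ⟨m, hm⟩ := exists_nat_one_div_lt (sub_pos.2 hlt)
        have := hx m
        linarith
    have hone : ∀ n : ℕ, ν (Set.Iic (c + 1 / ((n : ℝ) + 1))) = 1 := by
      intro n
      obtain ⟨t, htS, htlt⟩ := exists_lt_of_csInf_lt (by exact hne)
        (lt_add_of_pos_right c (by positivity : (0:ℝ) < 1 / ((n:ℝ)+1)))
      have := measure_mono (μ := ν) (Set.Iic_subset_Iic.2 htlt.le)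
      rw [htS] at this
      exact le_antisymm prob_le_one this
    rw [heq]
    have hcompl : ν (⋂ n : ℕ, Set.Iic (c + 1 / ((n : ℝ) + 1)))ᶜ = 0 := by
      rw [Set.compl_iInter]
      refine measure_iUnion_null fun n => ?_
      rw [prob_compl_eq_zero_iff measurableSet_Iic]
      exact hone n
    exact (prob_compl_eq_zero_iff (μ := ν)
      (MeasurableSet.iInter fun n : ℕ => measurableSet_Iic)).mp hcompl
  have hIio : ν (Set.Iio c) = 0 := by
    have heq : Set.Iio c = ⋃ n : ℕ, Set.Iic (c - 1 / ((n : ℝ) + 1)) := by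
      ext x
      simp only [Set.mem_Iio, Set.mem_iUnion, Set.mem_Iic]
      constructor
      · intro hx
        obtain ⟨m, hm⟩ := exists_nat_one_div_lt (sub_pos.2 hx)
        exact ⟨m, by linarith⟩
      · rintro ⟨n, hn⟩
        have : (0:ℝ) < 1 / ((n:ℝ)+1) := by positivity
        linarith
    rw [heq]
    refine measure_iUnion_null fun n => ?_
    refine (h _ measurableSet_Iic).resolve_right fun h1 => ?_
    have : c ≤ c - 1 / ((n : ℝ) + 1) := csInf_le hbdd h1
    have hp : (0:ℝ) < 1 / ((n:ℝ)+1) := by positivity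
    linarith
  refine ⟨c, ?_⟩
  have hsplit : Set.Iic c = Set.Iio c ∪ {c} := by
    ext x; simp [le_iff_lt_or_eq]
  have hd : Disjoint (Set.Iio c) {c} := by simp
  have hu := measure_union (μ := ν) hd (measurableSet_singleton c)
  rw [← hsplit, hIic, hIio, zero_add] at hu
  exact hu.symm

theorem statement10
    {Ω : Type*} [MeasurableSpace Ω] (P : Measure Ω) [IsProbabilityMeasure P]
    (n N : ℕ) (hn : 2 ≤ n) (hN : 1 ≤ N)
    (Y : Fin N → Ω → ℝ) (hYmeas : ∀ i, Measurable (Y i))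
    (hYindep : iIndepFun Y P)
    (Q : Measure (Fin n → Fin N)) [IsProbabilityMeasure Q]
    (s₀ : Fin n → Fin N) (hq₀ : 0 < Q {s₀})
    (k l : Fin n) (hkl : k ≠ l) (hrep : s₀ k = s₀ l)
    (hnc : ¬ ∃ c : ℝ, ∀ᵐ ω ∂P, Y (s₀ k) ω = c) :
    ¬ IndepFun (fun x : (Fin n → Fin N) × Ω => Y (x.1 k) x.2)
        (fun x : (Fin n → Fin N) × Ω => Y (x.1 l) x.2)
        ((Q.prod P)[|{s₀} ×ˢ Set.univ]) := by
  intro hInd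
  set s : Set ((Fin n → Fin N) × Ω) := {s₀} ×ˢ (Set.univ : Set Ω) with hs
  have hms : MeasurableSet s := (measurableSet_singleton s₀).prod MeasurableSet.univ
  have hm : (Q.prod P) s = Q {s₀} := by
    rw [hs, Measure.prod_prod, measure_univ, mul_one]
  have hm0 : (Q.prod P) s ≠ 0 := by rw [hm]; exact hq₀.ne'
  have hmtop : (Q.prod P) s ≠ ⊤ := by rw [hm]; exact measure_ne_top Q _
  -- intersection identities
  have hik : ∀ B : Set ℝ,
      s ∩ ((fun x : (Fin n → Fin N) × Ω => Y (x.1 k) x.2) ⁻¹' B)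
        = {s₀} ×ˢ (Y (s₀ k) ⁻¹' B) := by
    intro B
    ext ⟨t, ω⟩
    simp only [hs, Set.mem_inter_iff, Set.mem_prod, Set.mem_singleton_iff, Set.mem_univ,
      and_true, Set.mem_preimage]
    constructor
    · rintro ⟨rfl, hb⟩; exact ⟨rfl, hb⟩
    · rintro ⟨rfl, hb⟩; exact ⟨rfl, hb⟩
  have hil : ∀ B : Set ℝ,
      s ∩ ((fun x : (Fin n → Fin N) × Ω => Y (x.1 l) x.2) ⁻¹' B)
        = {s₀} ×ˢ (Y (s₀ k) ⁻¹' B) := by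
    intro B
    ext ⟨t, ω⟩
    simp only [hs, Set.mem_inter_iff, Set.mem_prod, Set.mem_singleton_iff, Set.mem_univ,
      and_true, Set.mem_preimage]
    constructor
    · rintro ⟨rfl, hb⟩; exact ⟨rfl, by rwa [hrep]⟩
    · rintro ⟨rfl, hb⟩; exact ⟨rfl, by rwa [← hrep]⟩
  have hprodmeas : ∀ A : Set Ω, MeasurableSet A →
      (Q.prod P) ({s₀} ×ˢ A) = Q {s₀} * P A := fun A _ => Measure.prod_prod _ _
  have hcond : ∀ A : Set Ω, ((Q.prod P) s)⁻¹ * (Q.prod P) ({s₀} ×ˢ A) = P A := by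
    intro A
    rw [hm, Measure.prod_prod, ← mul_assoc, ENNReal.inv_mul_cancel hq₀.ne'
      (measure_ne_top Q _), one_mul]
  have keyk : ∀ B : Set ℝ,
      ((Q.prod P)[|s]) ((fun x : (Fin n → Fin N) × Ω => Y (x.1 k) x.2) ⁻¹' B)
        = P (Y (s₀ k) ⁻¹' B) := by
    intro B
    rw [ProbabilityTheory.cond_apply hms, hik B, hcond]
  have keyl : ∀ B : Set ℝ,
      ((Q.prod P)[|s]) ((fun x : (Fin n → Fin N) × Ω => Y (x.1 l) x.2) ⁻¹' B)
        = P (Y (s₀ k) ⁻¹' B) := by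
    intro B
    rw [ProbabilityTheory.cond_apply hms, hil B, hcond]
  -- zero-one property for the distribution of Y (s₀ k)
  have hzo : ∀ B : Set ℝ, MeasurableSet B →
      P (Y (s₀ k) ⁻¹' B) = 0 ∨ P (Y (s₀ k) ⁻¹' B) = 1 := by
    intro B hB
    have hmul := hInd.measure_inter_preimage_eq_mul (s := B) (t := B) hB hB
    have hcap :
        ((fun x : (Fin n → Fin N) × Ω => Y (x.1 k) x.2) ⁻¹' B)
          ∩ ((fun x : (Fin n → Fin N) × Ω => Y (x.1 l) x.2) ⁻¹' B)
          ∩ s = {s₀} ×ˢ (Y (s₀ k) ⁻¹' B) := by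
      ext ⟨t, ω⟩
      simp only [hs, Set.mem_inter_iff, Set.mem_prod, Set.mem_singleton_iff, Set.mem_univ,
        and_true, Set.mem_preimage]
      constructor
      · rintro ⟨⟨hb, _⟩, rfl⟩; exact ⟨rfl, hb⟩
      · rintro ⟨rfl, hb⟩; exact ⟨⟨hb, by rwa [← hrep]⟩, rfl⟩
    have hL :
        ((Q.prod P)[|s]) (((fun x : (Fin n → Fin N) × Ω => Y (x.1 k) x.2) ⁻¹' B)
          ∩ ((fun x : (Fin n → Fin N) × Ω => Y (x.1 l) x.2) ⁻¹' B))
          = P (Y (s₀ k) ⁻¹' B) := by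
      rw [ProbabilityTheory.cond_apply hms, Set.inter_comm, hcap, hcond]
    rw [hL, keyk, keyl] at hmul
    by_cases h0 : P (Y (s₀ k) ⁻¹' B) = 0
    · exact Or.inl h0
    · refine Or.inr ?_
      have := (ENNReal.mul_right_inj h0 (measure_ne_top P _)
        (b := (1 : ENNReal)) (c := P (Y (s₀ k) ⁻¹' B))).mp
        (by rw [mul_one]; exact hmul)
      exact this.symm
  -- deduce a.s. constancy
  set ν : Measure ℝ := P.map (Y (s₀ k)) with hν
  have : IsProbabilityMeasure ν := Measure.isProbabilityMeasure_map (hYmeas _).aemeasurable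
  obtain ⟨c, hcone⟩ := zeroOne_dirac ν (by
    intro B hB
    rw [hν, Measure.map_apply (hYmeas _) hB]
    exact hzo B hB)
  refine hnc ⟨c, ?_⟩
  have hpre : P (Y (s₀ k) ⁻¹' {c}) = 1 := by
    rw [hν, Measure.map_apply (hYmeas _) (measurableSet_singleton c)] at hcone
    exact hcone
  have : P ((Y (s₀ k) ⁻¹' {c})ᶜ) = 0 := by
    rw [prob_compl_eq_zero_iff ((hYmeas _) (measurableSet_singleton c))]
    exact hpre
  filter_upwards [MeasureTheory.measure_eq_zero_iff_ae_notMem.mp this] with ω hω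
  simpa using hω
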